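/- arXiv:math/0409373 — 2 statements merged into one kernel-verified Lean document; each statement's English description precedes it below -/
import Mathlib

section
/- Let Z be the set of all r ∈ ℂ((z))[[λ]] such that the constant λ-term r(z,0) lies in ℂ[[z]] and is a unit of ℂ[[z]] (every such r is invertible in ℂ((z))[[λ]]), and let dlog : Z → ℂ((z))[[λ]] be the map r ↦ r⁻¹·(dr/dz). Then the image of dlog is exactly the set of s ∈ ℂ((z))[[λ]] such that s(z,0) ∈ ℂ[[z]] and res_{z=0} s = 0, i.e., every λ-coefficient of s has zero residue. -/
open PowerSeries

noncomputable section

/-- `K = ℂ((z))`, the field of formal Laurent series. -/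
abbrev K : Type := LaurentSeries ℂ

/-- The formal derivative `d/dz` on Laurent series. -/
def lD (f : K) : K where
  coeff n := ((n : ℂ) + 1) * f.coeff (n + 1)
  isPWO_support' := by
    apply Set.IsPWO.mono ((f.isPWO_support).image_of_monotone
      (f := fun m : ℤ => m - 1) (fun a b hab => by simpa using hab))
    intro n hn
    refine ⟨n + 1, ?_, by ring⟩
    intro h0
    apply hn
    simp [h0]

/-- `ℂ[[z]]` viewed as a subring of `ℂ((z))`. -/
def Oz : Subring K := (HahnSeries.ofPowerSeries ℤ ℂ).range

/-- `h ∈ ℂ[[z]]` has a simple zero at `z = 0`. -/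
def SimpleZero (h : PowerSeries ℂ) : Prop :=
  PowerSeries.coeff (R := ℂ) 0 h = 0 ∧ PowerSeries.coeff (R := ℂ) 1 h ≠ 0

/-- `K̂ = ℂ((z))[[λ]]`, formal power series in `λ` with Laurent series coefficients. -/
abbrev Khat : Type := PowerSeries K

/-- The `λ`-coefficientwise formal derivative `d/dz` on `ℂ((z))[[λ]]`. -/
def pD (F : Khat) : Khat := PowerSeries.mk fun i => lD (PowerSeries.coeff (R := K) i F)

/-- `F ∈ ℂ[[z,λ]]`: every `λ`-coefficient of `F` lies in `ℂ[[z]]`. -/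
def MemOhat (F : Khat) : Prop := ∀ i, PowerSeries.coeff (R := K) i F ∈ Oz

/-- The `λ`-gauge transform `Gauge_λ(A,R) = R⁻¹AR + λ·R⁻¹·(dR/dz)`. -/
def lamGauge (A R : Matrix (Fin 2) (Fin 2) Khat) : Matrix (Fin 2) (Fin 2) Khat :=
  R⁻¹ * A * R + (PowerSeries.X : Khat) • (R⁻¹ * R.map pD)

/-- The constant term in `λ`: `F(z,0)`. -/
def ev0 : Khat →+* K := PowerSeries.constantCoeff (R := K)

/-- The residue of a Laurent series: the coefficient of `z⁻¹`. -/
def res (f : K) : ℂ := f.coeff (-1)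

/-- The residue of an element of `ℂ((z))[[λ]]`, an element of `ℂ[[λ]]`. -/
def resHat (F : Khat) : PowerSeries ℂ := PowerSeries.mk fun i => res (PowerSeries.coeff (R := K) i F)

lemma lD_coeff (f : K) (n : ℤ) : (lD f).coeff n = ((n : ℂ) + 1) * f.coeff (n + 1) := rfl
lemma lD_add (f g : K) : lD (f + g) = lD f + lD g := by
  ext n; simp [lD_coeff, HahnSeries.coeff_add]; ring
lemma lD_zero : lD (0 : K) = 0 := by ext n; simp [lD_coeff]

def oPS : PowerSeries ℂ →+* K := HahnSeries.ofPowerSeries ℤ ℂ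

lemma oPS_coeff (p : PowerSeries ℂ) (n : ℤ) :
    (oPS p).coeff n = if n < 0 then 0 else PowerSeries.coeff (R := ℂ) n.natAbs p :=
  PowerSeries.coeff_coe p n

lemma lD_oPS (p : PowerSeries ℂ) : lD (oPS p) = oPS p.derivativeFun := by
  ext n
  rw [lD_coeff, oPS_coeff, oPS_coeff]
  rcases lt_trichotomy n (-1) with h | h | h
  · rw [if_pos (by omega), if_pos (by omega), mul_zero]
  · subst h; norm_num
  · have h0 : ¬ n < 0 := by omega
    obtain ⟨m, rfl⟩ : ∃ m : ℕ, n = (m : ℤ) := ⟨n.toNat, by omega⟩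
    have h1 : ¬ (m : ℤ) + 1 < 0 := by omega
    rw [if_neg h0, if_neg h1, show ((m:ℤ)+1).natAbs = m + 1 by omega, Int.natAbs_natCast, (show ∀ (f : PowerSeries ℂ) (n : ℕ), PowerSeries.coeff n f.derivativeFun = PowerSeries.coeff (n + 1) f * (n + 1) from fun f n => PowerSeries.coeff_derivative f n)]
    push_cast
    ring

lemma single_mul_coeff (a : ℤ) (c : ℂ) (x : K) (n : ℤ) :
    (HahnSeries.single a c * x).coeff n = c * x.coeff (n - a) := by
  have := HahnSeries.coeff_single_mul_add (r := c) (x := x) (b := a) (a := n - a)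
  rwa [sub_add_cancel] at this

lemma lD_single_mul (a : ℤ) (c : ℂ) (x : K) :
    lD (HahnSeries.single a c * x)
      = HahnSeries.single (a - 1) ((a : ℂ) * c) * x + HahnSeries.single a c * lD x := by
  ext n
  rw [lD_coeff, HahnSeries.coeff_add, single_mul_coeff, single_mul_coeff, single_mul_coeff,
    lD_coeff, show n + 1 - a = n - (a-1) by ring, show n - (a - 1) = n - a + 1 by ring]
  push_cast
  ring

lemma lD_single_mul' (a : ℤ) (c : ℂ) (x : K) :
    lD (HahnSeries.single a c * x)
      = HahnSeries.C (a:ℂ) * (HahnSeries.single (a - 1) c * x)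
        + HahnSeries.single a c * lD x := by
  rw [lD_single_mul]
  congr 1
  rw [← mul_assoc]
  congr 1
  rw [HahnSeries.C_apply, HahnSeries.single_mul_single, zero_add]

lemma lD_oPS_mul (p q : PowerSeries ℂ) :
    lD (oPS p * oPS q) = lD (oPS p) * oPS q + oPS p * lD (oPS q) := by
  rw [← map_mul, lD_oPS, PowerSeries.derivativeFun_mul, map_add, lD_oPS, lD_oPS,
    smul_eq_mul, smul_eq_mul, map_mul, map_mul]
  ring

private lemma key_alg {R : Type*} [CommRing R] (A A' B B' P Q DP DQ Ca Cb : R)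
    (h : A' * B = A * B') :
    (Ca + Cb) * ((A' * B) * (P * Q)) + (A * B) * (DP * Q + P * DQ)
      = (Ca * (A' * P) + A * DP) * (B * Q) + (A * P) * (Cb * (B' * Q) + B * DQ) := by
  linear_combination (Cb * P * Q) * h

lemma lD_mul (x y : K) : lD (x * y) = lD x * y + x * lD y := by
  by_cases hx : x = 0
  · simp [hx, lD_zero]
  by_cases hy : y = 0
  · simp [hy, lD_zero]
  set a := x.order with ha
  set b := y.order with hb
  set P := oPS x.powerSeriesPart with hP
  set Q := oPS y.powerSeriesPart with hQ
  have hx' : HahnSeries.single a 1 * P = x := x.single_order_mul_powerSeriesPart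
  have hy' : HahnSeries.single b 1 * Q = y := y.single_order_mul_powerSeriesPart
  have hA'B : HahnSeries.single (a-1) (1:ℂ) * HahnSeries.single b 1
      = HahnSeries.single (a+b-1) (1:ℂ) := by
    rw [HahnSeries.single_mul_single, one_mul]
    congr 1
    ring
  have hAB' : HahnSeries.single a (1:ℂ) * HahnSeries.single (b-1) 1
      = HahnSeries.single (a+b-1) (1:ℂ) := by
    rw [HahnSeries.single_mul_single, one_mul]
    congr 1
    ring
  have hAB : HahnSeries.single a (1:ℂ) * HahnSeries.single b 1
      = HahnSeries.single (a+b) (1:ℂ) := by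
    rw [HahnSeries.single_mul_single, one_mul]
  have hxy : x * y = HahnSeries.single (a+b) 1 * (P * Q) := by
    rw [← hx', ← hy', ← hAB]; ring
  have hPQ : lD (P * Q) = lD P * Q + P * lD Q := by
    rw [hP, hQ]; exact lD_oPS_mul _ _
  have hLx : lD x = HahnSeries.C (a:ℂ) * (HahnSeries.single (a-1) 1 * P)
      + HahnSeries.single a 1 * lD P := by
    conv_lhs => rw [← hx']
    rw [lD_single_mul']
  have hLy : lD y = HahnSeries.C (b:ℂ) * (HahnSeries.single (b-1) 1 * Q)
      + HahnSeries.single b 1 * lD Q := by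
    conv_lhs => rw [← hy']
    rw [lD_single_mul']
  have hCab : (HahnSeries.C (((a+b : ℤ)):ℂ) : K) = HahnSeries.C (a:ℂ) + HahnSeries.C (b:ℂ) := by
    push_cast
    rw [map_add]
  rw [hxy, lD_single_mul', hPQ, hLx, hLy]
  conv_rhs => rw [← hx', ← hy']
  linear_combination (HahnSeries.single (a+b-1) (1:ℂ) * P * Q) * hCab
    - (HahnSeries.C (a:ℂ) * P * Q) * hA'B
    - (HahnSeries.C (b:ℂ) * P * Q) * hAB'
    - (lD P * Q + P * lD Q) * hAB


def lDh : K →+ K := AddMonoidHom.mk' lD lD_add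

lemma lD_one : lD (1 : K) = 0 := by
  ext n
  rw [lD_coeff]
  rcases eq_or_ne n (-1) with h | h
  · simp [h]
  · have : (1 : K).coeff (n+1) = if n + 1 = 0 then 1 else 0 := by
      simpa using HahnSeries.coeff_single (a := (0:ℤ)) (r := (1:ℂ)) (b := n+1)
    rw [this, if_neg (by omega)]
    simp

lemma lD_sum {α : Type*} (s : Finset α) (f : α → K) :
    lD (∑ p ∈ s, f p) = ∑ p ∈ s, lD (f p) := map_sum lDh f s

lemma pD_coeff (F : Khat) (i : ℕ) : PowerSeries.coeff (R := K) i (pD F) = lD (PowerSeries.coeff (R := K) i F) :=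
  PowerSeries.coeff_mk _ _

lemma pD_add (F G : Khat) : pD (F + G) = pD F + pD G := by
  ext i
  simp [pD_coeff, lD_add]

lemma pD_mul (F G : Khat) : pD (F * G) = pD F * G + F * pD G := by
  ext i : 1
  simp only [pD_coeff, map_add, PowerSeries.coeff_mul, lD_sum]
  rw [← Finset.sum_add_distrib]
  exact Finset.sum_congr rfl fun p hp => by rw [lD_mul]

lemma pD_C (f : K) : pD (PowerSeries.C (R := K) f) = PowerSeries.C (R := K) (lD f) := by
  ext i
  rw [pD_coeff, PowerSeries.coeff_C, PowerSeries.coeff_C]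
  split_ifs <;> simp [lD_zero]

lemma pD_one : pD (1 : Khat) = 0 := by
  rw [← map_one (PowerSeries.C (R := K)), pD_C, lD_one, map_zero]

lemma pD_pow (v : Khat) (n : ℕ) :
    pD (v ^ (n+1)) = (n+1 : Khat) * v ^ n * pD v := by
  induction n with
  | zero => simp [pD_mul, pD_one]
  | succ n ih =>
    rw [pow_succ, pD_mul, ih]
    push_cast
    ring

def CC : ℂ →+* Khat := (PowerSeries.C (R := K)).comp (HahnSeries.C)

lemma lD_hC (c : ℂ) : lD (HahnSeries.C c : K) = 0 := by
  ext n
  rw [lD_coeff, HahnSeries.C_apply]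
  rcases eq_or_ne n (-1) with h | h
  · simp [h]
  · rw [HahnSeries.coeff_single, if_neg (by omega)]
    simp

lemma pD_zero : pD (0 : Khat) = 0 := by
  ext i : 1
  simp [pD_coeff, lD_zero]

lemma pD_CC_mul (c : ℂ) (G : Khat) : pD (CC c * G) = CC c * pD G := by
  rw [pD_mul, show (CC c : Khat) = PowerSeries.C (R := K) (HahnSeries.C c) from rfl, pD_C, lD_hC,
    map_zero, zero_mul, zero_add]

lemma coeff_pow_zero {w : Khat} (hw : PowerSeries.constantCoeff (R := K) w = 0) {i n : ℕ}
    (h : i < n) : PowerSeries.coeff (R := K) i (w ^ n) = 0 := by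
  have : (PowerSeries.X : Khat) ^ n ∣ w ^ n :=
    pow_dvd_pow_of_dvd (PowerSeries.X_dvd_iff.mpr hw) n
  exact PowerSeries.X_pow_dvd_iff.mp this i h

lemma coeff_pow_mul_zero {w B : Khat} (hw : PowerSeries.constantCoeff (R := K) w = 0) {i n : ℕ}
    (h : i < n) : PowerSeries.coeff (R := K) i (w ^ n * B) = 0 := by
  rw [PowerSeries.coeff_mul]
  refine Finset.sum_eq_zero fun p hp => ?_
  rw [coeff_pow_zero hw (lt_of_le_of_lt (Finset.HasAntidiagonal.antidiagonal.fst_le hp) h), zero_mul]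

def TN (c : ℕ → ℂ) (w : Khat) (N : ℕ) : Khat :=
  ∑ n ∈ Finset.range (N+1), CC (c n) * w ^ n

lemma coeff_TN (c : ℕ → ℂ) {w : Khat} (hw : PowerSeries.constantCoeff (R := K) w = 0) {i N : ℕ}
    (h : i ≤ N) :
    PowerSeries.coeff (R := K) i (TN c w N) = PowerSeries.coeff (R := K) i (TN c w i) := by
  rw [TN, TN, map_sum, map_sum]
  symm
  refine Finset.sum_subset (Finset.range_subset_range.mpr (by omega)) fun n hn hn' => ?_
  have : i < n := by
    simp only [Finset.mem_range] at hn hn'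
    omega
  rw [show (CC (c n) : Khat) = PowerSeries.C (R := K) (HahnSeries.C (c n)) from rfl,
    PowerSeries.coeff_C_mul, coeff_pow_zero hw this, mul_zero]

def comp0 (c : ℕ → ℂ) (w : Khat) : Khat :=
  PowerSeries.mk fun i => PowerSeries.coeff (R := K) i (TN c w (i+1))

lemma comp0_coeff (c : ℕ → ℂ) {w : Khat} (hw : PowerSeries.constantCoeff (R := K) w = 0) {i N : ℕ}
    (h : i ≤ N) :
    PowerSeries.coeff (R := K) i (comp0 c w) = PowerSeries.coeff (R := K) i (TN c w N) := by
  rw [comp0, PowerSeries.coeff_mk, coeff_TN c hw h, coeff_TN c hw (by omega : i ≤ i + 1)]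

lemma comp0_constantCoeff (c : ℕ → ℂ) {w : Khat} (hw : PowerSeries.constantCoeff (R := K) w = 0) :
    PowerSeries.constantCoeff (R := K) (comp0 c w) = HahnSeries.C (c 0) := by
  have h0 : PowerSeries.constantCoeff (R := K) (comp0 c w)
      = PowerSeries.coeff (R := K) 0 (TN c w 0) := by
    rw [← PowerSeries.coeff_zero_eq_constantCoeff_apply, comp0_coeff c hw (by omega : 0 ≤ 0)]
  rw [h0, TN, Finset.sum_range_one, pow_zero, mul_one,
    show (CC (c 0) : Khat) = PowerSeries.C (R := K) (HahnSeries.C (c 0)) from rfl,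
    PowerSeries.coeff_zero_eq_constantCoeff_apply, PowerSeries.constantCoeff_C]

def cL : ℕ → ℂ := fun n => (-1)^(n+1) * (n:ℂ)⁻¹
def cE : ℕ → ℂ := fun n => ((n.factorial : ℂ))⁻¹

lemma L_tel {w : Khat} (hw : PowerSeries.constantCoeff (R := K) w = 0) (N : ℕ) :
    (1 + w) * pD (TN cL w N) = pD w - (-w)^N * pD w := by
  induction N with
  | zero =>
    have : TN cL w 0 = 0 := by
      rw [TN, Finset.sum_range_one, show cL 0 = 0 by simp [cL], map_zero, zero_mul]
    rw [this, pD_zero, mul_zero, pow_zero, one_mul, sub_self]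
  | succ N ih =>
    have hstep : TN cL w (N+1) = TN cL w N + CC (cL (N+1)) * w^(N+1) :=
      Finset.sum_range_succ _ _
    have hnum : CC (cL (N+1)) * ((N : Khat) + 1) = (-1:Khat)^(N+2) := by
      have h1 : ((N:Khat)+1) = CC ((N:ℂ)+1) := by
        rw [map_add, map_natCast, map_one]
      have h2 : cL (N+1) * ((N:ℂ)+1) = (-1:ℂ)^(N+2) := by
        have hne : ((N:ℂ)+1) ≠ 0 := Nat.cast_add_one_ne_zero N
        rw [cL, mul_assoc]
        push_cast
        rw [inv_mul_cancel₀ hne, mul_one]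
      rw [h1, ← map_mul, h2, map_pow, map_neg, map_one]
    rw [hstep, pD_add, pD_CC_mul, pD_pow, mul_add, ih, neg_pow w N, neg_pow w (N+1)]
    linear_combination ((1+w) * w^N * pD w) * hnum

lemma L_key {w : Khat} (hw : PowerSeries.constantCoeff (R := K) w = 0) :
    (1 + w) * pD (comp0 cL w) = pD w := by
  ext i : 1
  have h1 : ∀ q ≤ i, PowerSeries.coeff (R := K) q (pD (comp0 cL w))
      = PowerSeries.coeff (R := K) q (pD (TN cL w (i+1))) := fun q hq => by
    rw [pD_coeff, pD_coeff, comp0_coeff cL hw (by omega : q ≤ i+1)]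
  have h2 : PowerSeries.coeff (R := K) i ((1 + w) * pD (comp0 cL w))
      = PowerSeries.coeff (R := K) i ((1 + w) * pD (TN cL w (i+1))) := by
    rw [PowerSeries.coeff_mul, PowerSeries.coeff_mul]
    exact Finset.sum_congr rfl fun p hp => by
      rw [h1 p.2 (Finset.HasAntidiagonal.antidiagonal.snd_le hp)]
  rw [h2, L_tel hw (i+1), map_sub, coeff_pow_mul_zero (by rw [map_neg, hw, neg_zero])
    (by omega : i < i + 1), sub_zero]

lemma E_tel {v : Khat} (hv : PowerSeries.constantCoeff (R := K) v = 0) (N : ℕ) :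
    pD (TN cE v (N+1)) = TN cE v N * pD v := by
  induction N with
  | zero =>
    have h1 : TN cE v 1 = CC (cE 0) * v^0 + CC (cE 1) * v^1 := by
      rw [TN, Finset.sum_range_succ, Finset.sum_range_one]
    have h0 : TN cE v 0 = CC (cE 0) * v^0 := by
      rw [TN, Finset.sum_range_one]
    have hc : cE 0 = 1 ∧ cE 1 = 1 := by constructor <;> simp [cE]
    rw [h1, h0, pD_add, pD_CC_mul, pD_CC_mul, pow_zero, pD_one, pow_one, hc.1, hc.2, map_one]
    ring
  | succ N ih =>
    have hstep : TN cE v (N+2) = TN cE v (N+1) + CC (cE (N+2)) * v^(N+2) :=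
      Finset.sum_range_succ _ _
    have hstep' : TN cE v (N+1) = TN cE v N + CC (cE (N+1)) * v^(N+1) :=
      Finset.sum_range_succ _ _
    have hnum : CC (cE (N+2)) * (((N+1 : ℕ) : Khat) + 1) = CC (cE (N+1)) := by
      have h1 : (((N+1:ℕ):Khat)+1) = CC (((N+1:ℕ):ℂ)+1) := by
        rw [map_add, map_natCast, map_one]
      have h2 : cE (N+2) * (((N+1:ℕ):ℂ)+1) = cE (N+1) := by
        have hB : (((N+1).factorial :ℂ)) ≠ 0 :=
          Nat.cast_ne_zero.mpr (N+1).factorial_ne_zero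
        have hA : ((N:ℂ)+2) ≠ 0 := by
          have : (((N+2 : ℕ)) : ℂ) ≠ 0 := Nat.cast_ne_zero.mpr (by omega)
          push_cast at this
          exact this
        have hfac : (((N+2).factorial : ℕ) : ℂ) = ((N:ℂ)+2) * (((N+1).factorial : ℕ) : ℂ) := by
          rw [Nat.factorial_succ (N+1)]
          push_cast
          ring
        rw [cE, cE, hfac, mul_inv]
        push_cast
        field_simp
        ring
      rw [h1, ← map_mul, h2]
    rw [hstep, pD_add, pD_CC_mul, pD_pow, ih, hstep']
    rw [show (CC (cE (N+2)) : Khat) * ((((N+1:ℕ) : Khat) + 1) * v^(N+1) * pD v)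
      = (CC (cE (N+2)) * (((N+1:ℕ):Khat)+1)) * v^(N+1) * pD v by push_cast; ring, hnum]
    ring

lemma E_key {v : Khat} (hv : PowerSeries.constantCoeff (R := K) v = 0) :
    pD (comp0 cE v) = comp0 cE v * pD v := by
  ext i : 1
  have h2 : PowerSeries.coeff (R := K) i (comp0 cE v * pD v)
      = PowerSeries.coeff (R := K) i (TN cE v i * pD v) := by
    rw [PowerSeries.coeff_mul, PowerSeries.coeff_mul]
    exact Finset.sum_congr rfl fun p hp => by
      rw [comp0_coeff cE hv (Finset.HasAntidiagonal.antidiagonal.fst_le hp)]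
  rw [h2, ← E_tel hv i, pD_coeff, pD_coeff, comp0_coeff cE hv (by omega : i ≤ i+1)]


lemma res_lD (x : K) : res (lD x) = 0 := by
  rw [res, lD_coeff]
  norm_num

lemma res_oPS (p : PowerSeries ℂ) : res (oPS p) = 0 := by
  rw [res, oPS_coeff, if_pos (by norm_num)]

lemma res_add (x y : K) : res (x + y) = res x + res y := HahnSeries.coeff_add

lemma res_sub (x y : K) : res (x - y) = res x - res y := by
  rw [res, res, res, HahnSeries.coeff_sub]

lemma res_zero : res (0 : K) = 0 := rfl

def antiD (f : K) : K where
  coeff n := if n = 0 then 0 else f.coeff (n-1) / (n : ℂ)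
  isPWO_support' := by
    apply Set.IsPWO.mono ((f.isPWO_support).image_of_monotone
      (f := fun m : ℤ => m + 1) (fun a b hab => by simpa using hab))
    intro n hn
    simp only [Function.mem_support] at hn
    by_cases h0 : n = 0
    · rw [if_pos h0] at hn
      exact absurd rfl hn
    · rw [if_neg h0] at hn
      refine ⟨n - 1, ?_, by ring⟩
      intro hz
      exact hn (by rw [hz, zero_div])

lemma antiD_coeff (f : K) (n : ℤ) :
    (antiD f).coeff n = if n = 0 then 0 else f.coeff (n-1) / (n : ℂ) := rfl

lemma antiD_zero : antiD (0 : K) = 0 := by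
  ext n
  rw [antiD_coeff]
  split_ifs <;> simp

lemma lD_antiD {x : K} (h : res x = 0) : lD (antiD x) = x := by
  ext n
  rw [lD_coeff, antiD_coeff]
  rcases eq_or_ne n (-1) with h1 | h1
  · subst h1
    rw [res] at h
    simp [h]
  · rw [if_neg (by omega), show n + 1 - 1 = n by ring]
    have hne : ((n:ℂ) + 1) ≠ 0 := by
      have : (((n+1 : ℤ)) : ℂ) ≠ 0 := Int.cast_ne_zero.mpr (by omega)
      push_cast at this
      exact this
    rw [show (((n+1:ℤ)):ℂ) = (n:ℂ)+1 by push_cast; ring, mul_div_cancel₀ _ hne]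

def gseq (q : PowerSeries ℂ) : ℕ → ℂ
  | 0 => 1
  | n+1 => (∑ k ∈ (Finset.range (n+1)).attach,
      gseq q k.1 * PowerSeries.coeff (R := ℂ) (n - k.1) q) / (n+1)
  decreasing_by exact Finset.mem_range.mp k.2

lemma gseq_succ (q : PowerSeries ℂ) (n : ℕ) :
    gseq q (n+1) = (∑ k ∈ Finset.range (n+1),
      gseq q k * PowerSeries.coeff (R := ℂ) (n - k) q) / (n+1) := by
  rw [gseq, ← Finset.sum_attach (Finset.range (n+1))
    (fun k => gseq q k * PowerSeries.coeff (R := ℂ) (n - k) q)]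

lemma gseq_deriv (q : PowerSeries ℂ) :
    (PowerSeries.mk (gseq q)).derivativeFun = PowerSeries.mk (gseq q) * q := by
  ext n
  rw [(show ∀ (f : PowerSeries ℂ) (n : ℕ), PowerSeries.coeff n f.derivativeFun = PowerSeries.coeff (n + 1) f * (n + 1) from fun f n => PowerSeries.coeff_derivative f n), PowerSeries.coeff_mk, gseq_succ,
    div_mul_cancel₀ _ (Nat.cast_add_one_ne_zero n : ((n:ℂ)+1) ≠ 0),
    PowerSeries.coeff_mul, Finset.Nat.sum_antidiagonal_eq_sum_range_succ_mk]
  exact Finset.sum_congr rfl fun k hk => by rw [PowerSeries.coeff_mk]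

/-- The image of `dlog : r ↦ r⁻¹·(dr/dz)`, defined on the set `Z` of
`r ∈ ℂ((z))[[λ]]` whose constant `λ`-term is a unit of `ℂ[[z]]`, is exactly the set of
`s ∈ ℂ((z))[[λ]]` with `s(z,0) ∈ ℂ[[z]]` and all residues zero. -/
theorem stmt8 (s : Khat) :
    (∃ r : Khat, (∃ g : PowerSeries ℂ, ev0 r = HahnSeries.ofPowerSeries ℤ ℂ g ∧ IsUnit g) ∧
        s = r⁻¹ * pD r) ↔
      (ev0 s ∈ Oz ∧ ∀ i, res (PowerSeries.coeff (R := K) i s) = 0) := by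
  constructor
  · rintro ⟨r, ⟨g, hg, hgu⟩, rfl⟩
    have hgne : g ≠ 0 := by
      rintro rfl
      exact not_isUnit_zero hgu
    have hf0 : oPS g ≠ 0 := by
      intro h
      apply hgne
      apply HahnSeries.ofPowerSeries_injective (Γ := ℤ) (R := ℂ)
      rw [map_zero]
      exact h
    have hr0 : PowerSeries.constantCoeff (R := K) r = oPS g := hg
    have hrne : PowerSeries.constantCoeff (R := K) r ≠ 0 := by rw [hr0]; exact hf0
    set w : Khat := PowerSeries.C (R := K) (oPS g)⁻¹ * r - 1 with hwdef
    have hw : PowerSeries.constantCoeff (R := K) w = 0 := by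
      rw [hwdef, map_sub, map_mul, PowerSeries.constantCoeff_C, hr0, map_one,
        inv_mul_cancel₀ hf0, sub_self]
    have hone : (1 : Khat) + w = PowerSeries.C (R := K) (oPS g)⁻¹ * r := by rw [hwdef]; ring
    have hr' : r = PowerSeries.C (R := K) (oPS g) * (1 + w) := by
      rw [hone, ← mul_assoc, ← map_mul, mul_inv_cancel₀ hf0, map_one, one_mul]
    have hLkey := L_key hw
    have hpd1w : pD (1 + w) = pD w := by rw [pD_add, pD_one, zero_add]
    have hCf : PowerSeries.C (R := K) (oPS g) * PowerSeries.C (R := K) ((oPS g)⁻¹ * lD (oPS g))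
        = PowerSeries.C (R := K) (lD (oPS g)) := by
      rw [← map_mul, ← mul_assoc, mul_inv_cancel₀ hf0, one_mul]
    have hA : r * (PowerSeries.C (R := K) ((oPS g)⁻¹ * lD (oPS g)) + pD (comp0 cL w)) = pD r := by
      conv_lhs => rw [hr']
      conv_rhs => rw [hr']
      rw [pD_mul, pD_C, hpd1w]
      linear_combination (PowerSeries.C (R := K) (oPS g)) * hLkey + ((1:Khat) + w) * hCf
    have hinv : r⁻¹ * r = 1 := by
      rw [mul_comm]; exact PowerSeries.mul_inv_cancel r hrne
    have hs : r⁻¹ * pD r = PowerSeries.C (R := K) ((oPS g)⁻¹ * lD (oPS g)) + pD (comp0 cL w) := by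
      rw [← hA, ← mul_assoc, hinv, one_mul]
    obtain ⟨u, hu⟩ := hgu
    have hmul : oPS g * oPS ((u⁻¹ : (PowerSeries ℂ)ˣ) : PowerSeries ℂ) = 1 := by
      rw [← hu, ← map_mul, Units.mul_inv, map_one]
    have hfinv : (oPS g)⁻¹ = oPS ((u⁻¹ : (PowerSeries ℂ)ˣ) : PowerSeries ℂ) :=
      inv_eq_of_mul_eq_one_right hmul
    have hrep : (oPS g)⁻¹ * lD (oPS g)
        = oPS (((u⁻¹ : (PowerSeries ℂ)ˣ) : PowerSeries ℂ) * g.derivativeFun) := by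
      rw [hfinv, lD_oPS, ← map_mul]
    rw [hs]
    constructor
    · have hL0 : PowerSeries.constantCoeff (R := K) (comp0 cL w) = 0 := by
        rw [comp0_constantCoeff cL hw, show cL 0 = 0 by simp [cL], map_zero]
      have hev : ev0 (PowerSeries.C (R := K) ((oPS g)⁻¹ * lD (oPS g)) + pD (comp0 cL w))
          = (oPS g)⁻¹ * lD (oPS g) := by
        show PowerSeries.constantCoeff (R := K) _ = _
        rw [map_add, PowerSeries.constantCoeff_C,
          ← PowerSeries.coeff_zero_eq_constantCoeff_apply, pD_coeff,
          PowerSeries.coeff_zero_eq_constantCoeff_apply, hL0, lD_zero, add_zero]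
      rw [hev, hrep]
      exact ⟨_, rfl⟩
    · intro i
      rw [map_add, PowerSeries.coeff_C, pD_coeff, res_add, res_lD, add_zero]
      split_ifs with h
      · rw [hrep]
        exact res_oPS _
      · exact res_zero
  · rintro ⟨hO, hres⟩
    obtain ⟨q, hq⟩ := hO
    set g : PowerSeries ℂ := PowerSeries.mk (gseq q) with hgdef
    have hg1 : PowerSeries.constantCoeff (R := ℂ) g = 1 := by
      rw [hgdef, ← PowerSeries.coeff_zero_eq_constantCoeff_apply, PowerSeries.coeff_mk, gseq]
    have hgu : IsUnit g := by
      rw [PowerSeries.isUnit_iff_constantCoeff, hg1]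
      exact isUnit_one
    have hgd : g.derivativeFun = g * q := gseq_deriv q
    have hfc : (oPS g).coeff (0:ℤ) = 1 := by
      rw [oPS_coeff, if_neg (by norm_num), show Int.natAbs 0 = 0 by norm_num,
        PowerSeries.coeff_zero_eq_constantCoeff_apply]
      exact hg1
    have hf0 : oPS g ≠ 0 := by
      intro h
      rw [h] at hfc
      simp at hfc
    have hlDf : lD (oPS g) = oPS g * oPS q := by
      rw [lD_oPS, hgd, map_mul]
    set t : Khat := s - PowerSeries.C (R := K) (oPS q) with htdef
    have ht0 : PowerSeries.constantCoeff (R := K) t = 0 := by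
      rw [htdef, map_sub, PowerSeries.constantCoeff_C]
      have : oPS q = PowerSeries.constantCoeff (R := K) s := hq
      rw [← this, sub_self]
    have htres : ∀ i, res (PowerSeries.coeff (R := K) i t) = 0 := by
      intro i
      rw [htdef, map_sub, res_sub, hres i, PowerSeries.coeff_C]
      split_ifs
      · rw [res_oPS]; ring
      · rw [res_zero]; ring
    set v : Khat := PowerSeries.mk fun i => antiD (PowerSeries.coeff (R := K) i t) with hvdef
    have hv0 : PowerSeries.constantCoeff (R := K) v = 0 := by
      rw [hvdef, ← PowerSeries.coeff_zero_eq_constantCoeff_apply, PowerSeries.coeff_mk,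
        PowerSeries.coeff_zero_eq_constantCoeff_apply, ht0, antiD_zero]
    have hpdv : pD v = t := by
      ext i : 1
      rw [pD_coeff, hvdef, PowerSeries.coeff_mk, lD_antiD (htres i)]
    have hE : pD (comp0 cE v) = comp0 cE v * t := by rw [E_key hv0, hpdv]
    have hE0 : PowerSeries.constantCoeff (R := K) (comp0 cE v) = 1 := by
      rw [comp0_constantCoeff cE hv0, show cE 0 = 1 by simp [cE], map_one]
    set r : Khat := PowerSeries.C (R := K) (oPS g) * comp0 cE v with hrdef
    have hev0r : PowerSeries.constantCoeff (R := K) r = oPS g := by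
      rw [hrdef, map_mul, PowerSeries.constantCoeff_C, hE0, mul_one]
    have hrne : PowerSeries.constantCoeff (R := K) r ≠ 0 := by rw [hev0r]; exact hf0
    have hpdr : pD r = r * s := by
      rw [hrdef, pD_mul, pD_C, hE, hlDf, map_mul]
      have hts : t = s - PowerSeries.C (R := K) (oPS q) := htdef
      linear_combination (PowerSeries.C (R := K) (oPS g)) * congrArg (fun x => comp0 cE v * x) hts
    refine ⟨r, ⟨g, hev0r, hgu⟩, ?_⟩
    have hinv : r⁻¹ * r = 1 := by
      rw [mul_comm]; exact PowerSeries.mul_inv_cancel r hrne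
    rw [hpdr, ← mul_assoc, hinv, one_mul]

end
end

section
/- Let A = Σᵢ Aᵢ(z)λⁱ ∈ M₂(ℂ((z))[[λ]]) be such that every coefficient Aᵢ is a diagonal matrix, and let R ∈ M₂(ℂ((z))[[λ]]) be invertible over ℂ((z))[[λ]] with R(z,0) ∈ M₂(ℂ[[z]]) and det R(z,0) ∈ ℂ[[z]] having a simple zero at z = 0. If Gauge_λ(A,R) = R⁻¹AR + λR⁻¹(dR/dz) ∈ M₂(ℂ[[z,λ]]), then z·A₁ ∈ M₂(ℂ[[z]]), i.e., the coefficient of λ in A has entries with at most a first-order pole at z = 0. -/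
open PowerSeries

noncomputable section

/-- The Laurent series `z`. -/
def zK : K := HahnSeries.ofPowerSeries ℤ ℂ PowerSeries.X


/-- valuation lower bound predicate -/
def ordOK (m : ℤ) (f : K) : Prop := ∀ n : ℤ, n < m → f.coeff n = 0

lemma ordOK_zero (m : ℤ) : ordOK m 0 := fun n _ => rfl

lemma ordOK_mono {m m' : ℤ} (h : m ≤ m') {f : K} (hf : ordOK m' f) : ordOK m f :=
  fun n hn => hf n (lt_of_lt_of_le hn h)

lemma ordOK_add {m : ℤ} {f g : K} (hf : ordOK m f) (hg : ordOK m g) : ordOK m (f + g) := by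
  intro n hn
  rw [HahnSeries.coeff_add, hf n hn, hg n hn, add_zero]

lemma ordOK_mul {m m' : ℤ} {f g : K} (hf : ordOK m f) (hg : ordOK m' g) :
    ordOK (m + m') (f * g) := by
  intro n hn
  rw [HahnSeries.coeff_mul]
  apply Finset.sum_eq_zero
  rintro ⟨i, j⟩ hij
  rw [Finset.mem_addAntidiagonal] at hij
  by_cases hi : i < m
  · rw [hf i hi, zero_mul]
  · have : j < m' := by omega
    rw [hg j this, mul_zero]

lemma ordOK_order (f : K) : ordOK f.order f := fun _ hn =>
  HahnSeries.coeff_eq_zero_of_lt_order hn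

lemma le_order_of_ordOK {m : ℤ} {f : K} (hf : ordOK m f) (h0 : f ≠ 0) : m ≤ f.order := by
  by_contra h
  exact (mt HahnSeries.coeff_order_eq_zero.mp h0) (hf _ (by omega))

lemma mem_Oz_iff {f : K} : f ∈ Oz ↔ ordOK 0 f := by
  constructor
  · rintro ⟨p, rfl⟩ n hn
    rw [HahnSeries.ofPowerSeries_apply]
    apply HahnSeries.embDomain_notin_range
    rintro ⟨m, hm⟩
    have hm : ((m : ℕ) : ℤ) = n := hm
    omega
  · intro hf
    by_cases h0 : f = 0
    · exact h0 ▸ zero_mem Oz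
    · have hord : 0 ≤ f.order := le_order_of_ordOK hf h0
      refine ⟨PowerSeries.X ^ f.order.toNat * f.powerSeriesPart, ?_⟩
      exact LaurentSeries.X_order_mul_powerSeriesPart (Int.toNat_of_nonneg hord)

lemma ordOK_of_mem_Oz {f : K} (hf : f ∈ Oz) : ordOK 0 f := mem_Oz_iff.mp hf

lemma ordOK_lD {m : ℤ} {f : K} (hf : ordOK m f) : ordOK (m - 1) (lD f) := by
  intro n hn
  show ((n : ℂ) + 1) * f.coeff (n + 1) = 0
  rw [hf (n + 1) (by omega), mul_zero]

lemma lD_mem_Oz {f : K} (hf : f ∈ Oz) : lD f ∈ Oz := by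
  rw [mem_Oz_iff] at hf ⊢
  intro n hn
  show ((n : ℂ) + 1) * f.coeff (n + 1) = 0
  rcases lt_or_eq_of_le (by omega : n + 1 ≤ 0) with h | h
  · rw [hf (n + 1) h, mul_zero]
  · have : (n : ℂ) + 1 = 0 := by
      have : n = -1 := by omega
      simp [this]
    rw [this, zero_mul]

lemma ordOK_of_mul_eq {a x g : K} (hx : x ≠ 0) (heq : a * x = g) {m : ℤ}
    (hg : ordOK m g) : ordOK (m - x.order) a := by
  by_cases ha : a = 0
  · exact ha ▸ ordOK_zero _
  · have hgne : g ≠ 0 := heq ▸ mul_ne_zero ha hx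
    have h1 : m ≤ g.order := le_order_of_ordOK hg hgne
    have h2 : g.order = a.order + x.order := heq ▸ HahnSeries.order_mul ha hx
    exact ordOK_mono (by omega) (ordOK_order a)

lemma zK_mul_mem_Oz {f : K} (hf : ordOK (-1) f) : zK * f ∈ Oz := by
  rw [mem_Oz_iff]
  intro n hn
  have hz : zK = HahnSeries.single (1 : ℤ) (1 : ℂ) := HahnSeries.ofPowerSeries_X
  rw [hz]
  have : n = (n - 1) + 1 := by ring
  rw [this, HahnSeries.coeff_single_mul_add, one_mul]
  exact hf (n - 1) (by omega)

/-- picking the component of minimal order -/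
lemma pick2 {x y : K} (h : ¬(x = 0 ∧ y = 0)) :
    (x ≠ 0 ∧ (y = 0 ∨ x.order ≤ y.order)) ∨ (y ≠ 0 ∧ (x = 0 ∨ y.order ≤ x.order)) := by
  by_cases hx : x = 0
  · right; exact ⟨fun hy => h ⟨hx, hy⟩, Or.inl hx⟩
  · by_cases hy : y = 0
    · left; exact ⟨hx, Or.inl hy⟩
    · rcases le_total x.order y.order with hle | hle
      · left; exact ⟨hx, Or.inr hle⟩
      · right; exact ⟨hy, Or.inr hle⟩

lemma ordOK_combo {x y u v w : K} (t : ℤ) (ht : t ≤ 0)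
    (hle : y = 0 ∨ x.order ≤ y.order) (hu : ordOK 0 u) (hv : ordOK 0 v)
    (hw : ordOK (x.order + t) w) : ordOK (x.order + t) (x * u + y * v + w) := by
  apply ordOK_add _ hw
  apply ordOK_add
  · exact ordOK_mono (by omega) ((add_zero x.order) ▸ ordOK_mul (ordOK_order x) hu)
  · rcases hle with rfl | hle
    · rw [zero_mul]; exact ordOK_zero _
    · exact ordOK_mono (by omega) ((add_zero y.order) ▸ ordOK_mul (ordOK_order y) hv)

/-- the key division estimate -/
lemma ordOK_key {a x y u v w : K} (hx : x ≠ 0) (hle : y = 0 ∨ x.order ≤ y.order)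
    (hu : ordOK 0 u) (hv : ordOK 0 v) (t : ℤ) (ht : t ≤ 0)
    (hw : ordOK (x.order + t) w) (heq : a * x = x * u + y * v + w) : ordOK t a := by
  have h := ordOK_of_mul_eq hx heq (ordOK_combo t ht hle hu hv hw)
  have h2 : x.order + t - x.order = t := by ring
  rw [h2] at h
  exact h

lemma ordOK_neg {m : ℤ} {f : K} (hf : ordOK m f) : ordOK m (-f) := by
  intro n hn
  rw [HahnSeries.coeff_neg, hf n hn, neg_zero]

lemma core
    (r0 r1 s0 s1 b00 b01 b10 b11 c00 c01 c10 c11 a0 d0 a1 rho0 rho1 : K)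
    (hr0 : r0 ∈ Oz) (hr1 : r1 ∈ Oz) (hs0 : s0 ∈ Oz) (hs1 : s1 ∈ Oz)
    (hb00 : b00 ∈ Oz) (hb01 : b01 ∈ Oz) (hb10 : b10 ∈ Oz) (hb11 : b11 ∈ Oz)
    (hc00 : c00 ∈ Oz) (hc01 : c01 ∈ Oz) (hc10 : c10 ∈ Oz) (hc11 : c11 ∈ Oz)
    (h : PowerSeries ℂ) (hH : r0 * s1 - r1 * s0 = HahnSeries.ofPowerSeries ℤ ℂ h)
    (hh0 : PowerSeries.coeff (R := ℂ) 0 h = 0) (hh1 : PowerSeries.coeff (R := ℂ) 1 h ≠ 0)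
    (e0 : r0 * b00 + r1 * b10 = a0 * r0)
    (e1 : r0 * b01 + r1 * b11 = a0 * r1)
    (f0 : r0 * c00 + r1 * c10 + rho0 * b00 + rho1 * b10 = a0 * rho0 + a1 * r0 + lD r0)
    (f1 : r0 * c01 + r1 * c11 + rho0 * b01 + rho1 * b11 = a0 * rho1 + a1 * r1 + lD r1)
    (g0 : s0 * b00 + s1 * b10 = d0 * s0)
    (g1 : s0 * b01 + s1 * b11 = d0 * s1) :
    zK * a1 ∈ Oz := by
  -- facts about H = r0*s1 - r1*s0
  have hHc1 : (r0 * s1 - r1 * s0).coeff 1 ≠ 0 := by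
    rw [hH]
    have := HahnSeries.ofPowerSeries_apply_coeff (Γ := ℤ) h 1
    simpa using this ▸ hh1
  have hHne : r0 * s1 - r1 * s0 ≠ 0 := fun h0 => hHc1 (by rw [h0]; rfl)
  have hHmem : r0 * s1 - r1 * s0 ∈ Oz := ⟨h, hH.symm⟩
  have hHord1 : ordOK 1 (r0 * s1 - r1 * s0) := by
    intro n hn
    rcases lt_or_eq_of_le (by omega : n ≤ 0) with h' | h'
    · exact ordOK_of_mem_Oz hHmem n h'
    · subst h'
      rw [hH]
      have := HahnSeries.ofPowerSeries_apply_coeff (Γ := ℤ) h 0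
      simpa using this ▸ hh0
  have hordH : (r0 * s1 - r1 * s0).order = 1 :=
    le_antisymm (HahnSeries.order_le_of_coeff_ne_zero hHc1) (le_order_of_ordOK hHord1 hHne)
  have hrne : ¬(r0 = 0 ∧ r1 = 0) := by
    rintro ⟨rfl, rfl⟩
    exact hHne (by ring)
  -- a0 is holomorphic
  have ha0 : ordOK 0 a0 := by
    rcases pick2 hrne with ⟨hx, hle⟩ | ⟨hx, hle⟩
    · exact ordOK_key hx hle (ordOK_of_mem_Oz hb00) (ordOK_of_mem_Oz hb10) 0 le_rfl
        (ordOK_zero _) (by linear_combination -e0)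
    · exact ordOK_key hx hle (ordOK_of_mem_Oz hb11) (ordOK_of_mem_Oz hb01) 0 le_rfl
        (ordOK_zero _) (by linear_combination -e1)
  have ha0m : a0 ∈ Oz := mem_Oz_iff.mpr ha0
  have k0 : r0 * (b00 - a0) + r1 * b10 = 0 := by linear_combination e0
  have k1 : r0 * b01 + r1 * (b11 - a0) = 0 := by linear_combination e1
  by_cases hC : b00 - a0 = 0 ∧ b01 = 0 ∧ b10 = 0 ∧ b11 - a0 = 0
  · -- Case A : B₀ is scalar
    obtain ⟨hC1, hC2, hC3, hC4⟩ := hC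
    apply zK_mul_mem_Oz
    rcases pick2 hrne with ⟨hx, hle⟩ | ⟨hx, hle⟩
    · refine ordOK_key hx hle (ordOK_of_mem_Oz hc00) (ordOK_of_mem_Oz hc10) (-1) (by omega)
        (w := -(lD r0)) ?_ (by linear_combination -f0 + rho0 * hC1 + rho1 * hC3)
      have := ordOK_neg (ordOK_lD (ordOK_order r0))
      exact ordOK_mono (by omega) this
    · refine ordOK_key hx hle (ordOK_of_mem_Oz hc11) (ordOK_of_mem_Oz hc01) (-1) (by omega)
        (w := -(lD r1)) ?_ (by linear_combination -f1 + rho0 * hC2 + rho1 * hC4)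
      have := ordOK_neg (ordOK_lD (ordOK_order r1))
      exact ordOK_mono (by omega) this
  · -- Case B : B₀ is not scalar
    -- a0 ≠ d0
    have had0 : a0 ≠ d0 := by
      intro had
      have k0s : s0 * (b00 - a0) + s1 * b10 = 0 := by linear_combination g0 - s0 * had
      have k1s : s0 * b01 + s1 * (b11 - a0) = 0 := by linear_combination g1 - s1 * had
      have hz1 : (r0 * s1 - r1 * s0) * (b00 - a0) = 0 := by
        linear_combination s1 * k0 - r1 * k0s
      have hz2 : (r0 * s1 - r1 * s0) * b01 = 0 := by
        linear_combination s1 * k1 - r1 * k1s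
      have hz3 : (r0 * s1 - r1 * s0) * b10 = 0 := by
        linear_combination r0 * k0s - s0 * k0
      have hz4 : (r0 * s1 - r1 * s0) * (b11 - a0) = 0 := by
        linear_combination r0 * k1s - s0 * k1
      exact hC ⟨(mul_eq_zero.mp hz1).resolve_left hHne,
        (mul_eq_zero.mp hz2).resolve_left hHne,
        (mul_eq_zero.mp hz3).resolve_left hHne,
        (mul_eq_zero.mp hz4).resolve_left hHne⟩
    -- det C = 0
    have hdetC : (b00 - a0) * (b11 - a0) - b01 * b10 = 0 := by
      by_cases hr0z : r0 = 0
      · have hr1z : r1 ≠ 0 := fun h' => hrne ⟨hr0z, h'⟩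
        have h10 : b10 = 0 := by
          have := k0; rw [hr0z] at this
          have : r1 * b10 = 0 := by linear_combination this
          exact (mul_eq_zero.mp this).resolve_left hr1z
        have h11 : b11 - a0 = 0 := by
          have := k1; rw [hr0z] at this
          have : r1 * (b11 - a0) = 0 := by linear_combination this
          exact (mul_eq_zero.mp this).resolve_left hr1z
        linear_combination (b00 - a0) * h11 - b01 * h10
      · have : r0 * ((b00 - a0) * (b11 - a0) - b01 * b10) = 0 := by
          linear_combination (b11 - a0) * k0 - b10 * k1
        exact (mul_eq_zero.mp this).resolve_left hr0z
    -- main estimate for any kernel vector w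
    have main : ∀ w0 w1 : K, w0 ∈ Oz → w1 ∈ Oz → ¬(w0 = 0 ∧ w1 = 0) →
        (b00 - a0) * w0 + b01 * w1 = 0 → b10 * w0 + (b11 - a0) * w1 = 0 →
        ordOK (-1) a1 := by
      intro w0 w1 hw0 hw1 hwne hCw0 hCw1
      have hsw : s0 * w0 + s1 * w1 = 0 := by
        have h1 : (d0 - a0) * (s0 * w0 + s1 * w1) = 0 := by
          linear_combination (-w0) * g0 - w1 * g1 + s0 * hCw0 + s1 * hCw1
        rcases mul_eq_zero.mp h1 with h' | h'
        · exact absurd (by linear_combination -h') had0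
        · exact h'
      have hq0 : (r0 * s1 - r1 * s0) * w0 = s1 * (r0 * w0 + r1 * w1) := by
        linear_combination (-r1) * hsw
      have hq1 : (r0 * s1 - r1 * s0) * w1 = (-s0) * (r0 * w0 + r1 * w1) := by
        linear_combination r0 * hsw
      have ht0 : ordOK 0 (r0 * c00 + r1 * c10 - lD r0) :=
        ordOK_of_mem_Oz (sub_mem (add_mem (mul_mem hr0 hc00) (mul_mem hr1 hc10))
          (lD_mem_Oz hr0))
      have ht1 : ordOK 0 (r0 * c01 + r1 * c11 - lD r1) :=
        ordOK_of_mem_Oz (sub_mem (add_mem (mul_mem hr0 hc01) (mul_mem hr1 hc11))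
          (lD_mem_Oz hr1))
      have ha1q : a1 * (r0 * w0 + r1 * w1) =
          w0 * (r0 * c00 + r1 * c10 - lD r0) + w1 * (r0 * c01 + r1 * c11 - lD r1) := by
        linear_combination (-w0) * f0 - w1 * f1 + rho0 * hCw0 + rho1 * hCw1
      rcases pick2 hwne with ⟨hx, hle⟩ | ⟨hx, hle⟩
      · have hHw : (r0 * s1 - r1 * s0) * w0 ≠ 0 := mul_ne_zero hHne hx
        have hs1q : s1 * (r0 * w0 + r1 * w1) ≠ 0 := hq0 ▸ hHw
        have hs1ne : s1 ≠ 0 := fun h' => hs1q (by rw [h', zero_mul])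
        have hqne : (r0 * w0 + r1 * w1) ≠ 0 := fun h' => hs1q (by rw [h', mul_zero])
        have horder : (r0 * s1 - r1 * s0).order + w0.order
            = s1.order + (r0 * w0 + r1 * w1).order := by
          rw [← HahnSeries.order_mul hHne hx, ← HahnSeries.order_mul hs1ne hqne, hq0]
        have hN : ordOK (w0.order + 0)
            (w0 * (r0 * c00 + r1 * c10 - lD r0) + w1 * (r0 * c01 + r1 * c11 - lD r1) + 0) := by
          apply ordOK_add _ (ordOK_zero _)
          apply ordOK_add
          · exact ordOK_mono (by omega) ((add_zero w0.order) ▸ ordOK_mul (ordOK_order w0) ht0)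
          · rcases hle with rfl | hle
            · rw [zero_mul]; exact ordOK_zero _
            · exact ordOK_mono (by omega) ((add_zero w1.order) ▸ ordOK_mul (ordOK_order w1) ht1)
        have heqx : a1 * (r0 * w0 + r1 * w1) =
            w0 * (r0 * c00 + r1 * c10 - lD r0) + w1 * (r0 * c01 + r1 * c11 - lD r1) + 0 := by
          linear_combination ha1q
        have hfin := ordOK_of_mul_eq hqne heqx hN
        apply ordOK_mono _ hfin
        have hs1ord : 0 ≤ s1.order := le_order_of_ordOK (ordOK_of_mem_Oz hs1) hs1ne
        rw [hordH] at horder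
        omega
      · have hHw : (r0 * s1 - r1 * s0) * w1 ≠ 0 := mul_ne_zero hHne hx
        have hs0q : (-s0) * (r0 * w0 + r1 * w1) ≠ 0 := hq1 ▸ hHw
        have hs0ne : (-s0) ≠ 0 := fun h' => hs0q (by rw [h', zero_mul])
        have hqne : (r0 * w0 + r1 * w1) ≠ 0 := fun h' => hs0q (by rw [h', mul_zero])
        have horder : (r0 * s1 - r1 * s0).order + w1.order
            = (-s0).order + (r0 * w0 + r1 * w1).order := by
          rw [← HahnSeries.order_mul hHne hx, ← HahnSeries.order_mul hs0ne hqne, hq1]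
        have hN : ordOK (w1.order + 0)
            (w1 * (r0 * c01 + r1 * c11 - lD r1) + w0 * (r0 * c00 + r1 * c10 - lD r0) + 0) := by
          apply ordOK_add _ (ordOK_zero _)
          apply ordOK_add
          · exact ordOK_mono (by omega) ((add_zero w1.order) ▸ ordOK_mul (ordOK_order w1) ht1)
          · rcases hle with rfl | hle
            · rw [zero_mul]; exact ordOK_zero _
            · exact ordOK_mono (by omega) ((add_zero w0.order) ▸ ordOK_mul (ordOK_order w0) ht0)
        have heqx : a1 * (r0 * w0 + r1 * w1) =
            w1 * (r0 * c01 + r1 * c11 - lD r1) + w0 * (r0 * c00 + r1 * c10 - lD r0) + 0 := by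
          linear_combination ha1q
        have hfin := ordOK_of_mul_eq hqne heqx hN
        apply ordOK_mono _ hfin
        have hs0ord : 0 ≤ (-s0).order :=
          le_order_of_ordOK (ordOK_of_mem_Oz (neg_mem hs0)) hs0ne
        rw [hordH] at horder
        omega
    apply zK_mul_mem_Oz
    by_cases hcol : b11 - a0 = 0 ∧ b10 = 0
    · refine main (-b01) (b00 - a0) (neg_mem hb01) (sub_mem hb00 ha0m) ?_ (by ring) ?_
      · rintro ⟨h1, h2⟩
        exact hC ⟨h2, neg_eq_zero.mp h1, hcol.2, hcol.1⟩
      · linear_combination hdetC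
    · refine main (b11 - a0) (-b10) (sub_mem hb11 ha0m) (neg_mem hb10) ?_
        (by linear_combination hdetC) (by ring)
      rintro ⟨h1, h2⟩
      exact hcol ⟨h1, neg_eq_zero.mp h2⟩

set_option maxHeartbeats 1000000 in
/-- Suppose `A ∈ M₂(ℂ((z))[[λ]])` is diagonal and
`R ∈ M₂(ℂ((z))[[λ]])` is invertible with `R(z,0) ∈ M₂(ℂ[[z]])` and `det R(z,0)` having a
simple zero at `z = 0`. If `Gauge_λ(A,R) ∈ M₂(ℂ[[z,λ]])`, then `z·A₁ ∈ M₂(ℂ[[z]])`. -/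
theorem stmt12 (A : Matrix (Fin 2) (Fin 2) Khat)
    (hdiag : ∀ i j, i ≠ j → A i j = 0)
    (R : Matrix (Fin 2) (Fin 2) Khat) (hR : IsUnit R)
    (hR0 : ∀ i j, (R.map ev0) i j ∈ Oz)
    (hdet : ∃ h : PowerSeries ℂ, (R.map ev0).det = HahnSeries.ofPowerSeries ℤ ℂ h ∧
      SimpleZero h)
    (hgauge : ∀ i j, MemOhat (lamGauge A R i j)) :
    ∀ i j, zK * PowerSeries.coeff (R := K) 1 (A i j) ∈ Oz := by
  classical
  have hdetR : IsUnit R.det := (Matrix.isUnit_iff_isUnit_det R).mp hR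
  have hRR : R * R⁻¹ = 1 := Matrix.mul_nonsing_inv R hdetR
  set B := lamGauge A R with hBdef
  have ev0_eq : ∀ F : Khat, PowerSeries.constantCoeff (R := K) F = ev0 F := fun _ => rfl
  have hS00 : R 0 0 * R⁻¹ 0 0 + R 0 1 * R⁻¹ 1 0 = 1 := by
    have h := congrFun (congrFun hRR 0) 0
    rw [Matrix.mul_apply, Fin.sum_univ_two] at h
    simpa [Matrix.one_apply] using h
  have hS01 : R 0 0 * R⁻¹ 0 1 + R 0 1 * R⁻¹ 1 1 = 0 := by
    have h := congrFun (congrFun hRR 0) 1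
    rw [Matrix.mul_apply, Fin.sum_univ_two] at h
    simpa [Matrix.one_apply] using h
  have hS10 : R 1 0 * R⁻¹ 0 0 + R 1 1 * R⁻¹ 1 0 = 0 := by
    have h := congrFun (congrFun hRR 1) 0
    rw [Matrix.mul_apply, Fin.sum_univ_two] at h
    simpa [Matrix.one_apply] using h
  have hS11 : R 1 0 * R⁻¹ 0 1 + R 1 1 * R⁻¹ 1 1 = 1 := by
    have h := congrFun (congrFun hRR 1) 1
    rw [Matrix.mul_apply, Fin.sum_univ_two] at h
    simpa [Matrix.one_apply] using h
  have hA01 : A 0 1 = 0 := hdiag 0 1 (by decide)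
  have hA10 : A 1 0 = 0 := hdiag 1 0 (by decide)
  have hBe : ∀ k j : Fin 2, B k j =
      (R⁻¹ k 0 * A 0 0 + R⁻¹ k 1 * A 1 0) * R 0 j
      + (R⁻¹ k 0 * A 0 1 + R⁻¹ k 1 * A 1 1) * R 1 j
      + PowerSeries.X * (R⁻¹ k 0 * pD (R 0 j) + R⁻¹ k 1 * pD (R 1 j)) := by
    intro k j
    rw [hBdef]
    show (R⁻¹ * A * R + (PowerSeries.X : Khat) • (R⁻¹ * R.map pD)) k j = _
    simp only [Matrix.add_apply, Matrix.smul_apply, smul_eq_mul, Matrix.mul_apply,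
      Matrix.map_apply, Fin.sum_univ_two]
  have hE : ∀ i j : Fin 2, R i 0 * B 0 j + R i 1 * B 1 j
      = A i i * R i j + (PowerSeries.X : Khat) * pD (R i j) := by
    intro i j
    rw [hBe 0 j, hBe 1 j]
    fin_cases i
    · show R 0 0 * _ + R 0 1 * _ = A 0 0 * R 0 j + _ * pD (R 0 j)
      rw [hA01, hA10]
      linear_combination (A 0 0 * R 0 j + PowerSeries.X * pD (R 0 j)) * hS00
        + (A 1 1 * R 1 j + PowerSeries.X * pD (R 1 j)) * hS01
    · show R 1 0 * _ + R 1 1 * _ = A 1 1 * R 1 j + _ * pD (R 1 j)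
      rw [hA01, hA10]
      linear_combination (A 0 0 * R 0 j + PowerSeries.X * pD (R 0 j)) * hS10
        + (A 1 1 * R 1 j + PowerSeries.X * pD (R 1 j)) * hS11
  have E0 : ∀ i j : Fin 2, ev0 (R i 0) * ev0 (B 0 j) + ev0 (R i 1) * ev0 (B 1 j)
      = ev0 (A i i) * ev0 (R i j) := by
    intro i j
    have h1 := congrArg (⇑ev0) (hE i j)
    simp only [map_add, map_mul] at h1
    have hX0 : ev0 (PowerSeries.X : Khat) = 0 := PowerSeries.constantCoeff_X
    rw [hX0, zero_mul, add_zero] at h1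
    exact h1
  have E1 : ∀ i j : Fin 2,
      ev0 (R i 0) * PowerSeries.coeff (R := K) 1 (B 0 j)
      + PowerSeries.coeff (R := K) 1 (R i 0) * ev0 (B 0 j)
      + (ev0 (R i 1) * PowerSeries.coeff (R := K) 1 (B 1 j)
        + PowerSeries.coeff (R := K) 1 (R i 1) * ev0 (B 1 j))
      = ev0 (A i i) * PowerSeries.coeff (R := K) 1 (R i j)
        + PowerSeries.coeff (R := K) 1 (A i i) * ev0 (R i j) + lD (ev0 (R i j)) := by
    intro i j
    have h1 := congrArg (⇑(PowerSeries.coeff (R := K) 1)) (hE i j)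
    have hXp : PowerSeries.coeff (R := K) 1 ((PowerSeries.X : Khat) * pD (R i j))
        = lD (ev0 (R i j)) := by
      have h2 : PowerSeries.coeff (R := K) (0 + 1) ((PowerSeries.X : Khat) * pD (R i j))
          = PowerSeries.coeff (R := K) 0 (pD (R i j)) := PowerSeries.coeff_succ_X_mul 0 _
      rw [zero_add] at h2
      rw [h2]
      have hpD : ∀ F : Khat, PowerSeries.coeff (R := K) 0 (pD F) = lD (ev0 F) := by
        intro F
        simp only [pD, PowerSeries.coeff_mk]
        exact congrArg lD (by rw [PowerSeries.coeff_zero_eq_constantCoeff]; rfl)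
      exact hpD _
    rw [map_add, map_add, PowerSeries.coeff_one_mul, PowerSeries.coeff_one_mul,
      PowerSeries.coeff_one_mul, hXp] at h1
    simp only [ev0_eq] at h1
    linear_combination h1
  have hRmem : ∀ i j : Fin 2, ev0 (R i j) ∈ Oz := by
    intro i j
    have := hR0 i j
    rwa [Matrix.map_apply] at this
  have hBmem0 : ∀ k j : Fin 2, ev0 (B k j) ∈ Oz := by
    intro k j
    have := hgauge k j 0
    rwa [PowerSeries.coeff_zero_eq_constantCoeff] at this
  have hBmem1 : ∀ k j : Fin 2, PowerSeries.coeff (R := K) 1 (B k j) ∈ Oz := fun k j => hgauge k j 1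
  obtain ⟨h, hdeteq, hh0, hh1⟩ := hdet
  have hHeq : ev0 (R 0 0) * ev0 (R 1 1) - ev0 (R 0 1) * ev0 (R 1 0)
      = HahnSeries.ofPowerSeries ℤ ℂ h := by
    rw [← hdeteq, Matrix.det_fin_two, Matrix.map_apply, Matrix.map_apply,
      Matrix.map_apply, Matrix.map_apply]
  intro i j
  by_cases hij : i = j
  · subst hij
    fin_cases i
    · exact core (ev0 (R 0 0)) (ev0 (R 0 1)) (ev0 (R 1 0)) (ev0 (R 1 1))
        (ev0 (B 0 0)) (ev0 (B 0 1)) (ev0 (B 1 0)) (ev0 (B 1 1))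
        (PowerSeries.coeff (R := K) 1 (B 0 0)) (PowerSeries.coeff (R := K) 1 (B 0 1))
        (PowerSeries.coeff (R := K) 1 (B 1 0)) (PowerSeries.coeff (R := K) 1 (B 1 1))
        (ev0 (A 0 0)) (ev0 (A 1 1)) (PowerSeries.coeff (R := K) 1 (A 0 0))
        (PowerSeries.coeff (R := K) 1 (R 0 0)) (PowerSeries.coeff (R := K) 1 (R 0 1))
        (hRmem 0 0) (hRmem 0 1) (hRmem 1 0) (hRmem 1 1)
        (hBmem0 0 0) (hBmem0 0 1) (hBmem0 1 0) (hBmem0 1 1)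
        (hBmem1 0 0) (hBmem1 0 1) (hBmem1 1 0) (hBmem1 1 1)
        h hHeq hh0 hh1
        (by linear_combination E0 0 0) (by linear_combination E0 0 1)
        (by linear_combination E1 0 0) (by linear_combination E1 0 1)
        (by linear_combination E0 1 0) (by linear_combination E0 1 1)
    · refine core (ev0 (R 1 0)) (ev0 (R 1 1)) (ev0 (R 0 0)) (ev0 (R 0 1))
        (ev0 (B 0 0)) (ev0 (B 0 1)) (ev0 (B 1 0)) (ev0 (B 1 1))
        (PowerSeries.coeff (R := K) 1 (B 0 0)) (PowerSeries.coeff (R := K) 1 (B 0 1))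
        (PowerSeries.coeff (R := K) 1 (B 1 0)) (PowerSeries.coeff (R := K) 1 (B 1 1))
        (ev0 (A 1 1)) (ev0 (A 0 0)) (PowerSeries.coeff (R := K) 1 (A 1 1))
        (PowerSeries.coeff (R := K) 1 (R 1 0)) (PowerSeries.coeff (R := K) 1 (R 1 1))
        (hRmem 1 0) (hRmem 1 1) (hRmem 0 0) (hRmem 0 1)
        (hBmem0 0 0) (hBmem0 0 1) (hBmem0 1 0) (hBmem0 1 1)
        (hBmem1 0 0) (hBmem1 0 1) (hBmem1 1 0) (hBmem1 1 1)
        (-h) ?_ (by rw [map_neg, hh0, neg_zero]) (by rw [map_neg]; exact neg_ne_zero.mpr hh1)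
        (by linear_combination E0 1 0) (by linear_combination E0 1 1)
        (by linear_combination E1 1 0) (by linear_combination E1 1 1)
        (by linear_combination E0 0 0) (by linear_combination E0 0 1)
      rw [map_neg]
      linear_combination -hHeq
  · rw [hdiag i j hij]
    simp only [map_zero, mul_zero]
    exact zero_mem Oz


end
end
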